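/- Let p be an odd prime, n an integer, and let x₀, y₀, z₀ be positive integers with gcd(x₀, y₀) = 1, x₀ and z₀ odd, y₀ even, satisfying (x₀² + ny₀²)² − z₀² = p·y₀⁴. Then gcd(x₀² + ny₀², z₀) = 1. -/

import Mathlib

theorem stmt14 (p n x₀ y₀ z₀ : ℤ) (hp : Prime p) (hpodd : Odd p)
    (hx : 0 < x₀) (hy : 0 < y₀) (hz : 0 < z₀)
    (hgcd : IsCoprime x₀ y₀) (hxodd : Odd x₀) (hzodd : Odd z₀) (hyeven : Even y₀)
    (heq : (x₀ ^ 2 + n * y₀ ^ 2) ^ 2 - z₀ ^ 2 = p * y₀ ^ 4) :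
    IsCoprime (x₀ ^ 2 + n * y₀ ^ 2) z₀ := by
  rw [Int.isCoprime_iff_gcd_eq_one]
  by_contra hne
  set A := x₀ ^ 2 + n * y₀ ^ 2 with hA
  obtain ⟨q, hq, hqdvd⟩ := Nat.exists_prime_and_dvd hne
  have hqZ : Prime (q : ℤ) := Nat.prime_iff_prime_int.mp hq
  have hqA : (q : ℤ) ∣ A :=
    dvd_trans (Int.natCast_dvd_natCast.mpr hqdvd) (Int.gcd_dvd_left _ _)
  have hqz : (q : ℤ) ∣ z₀ :=
    dvd_trans (Int.natCast_dvd_natCast.mpr hqdvd) (Int.gcd_dvd_right _ _)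
  -- q dividing y₀ is impossible
  have hqy : ¬ ((q : ℤ) ∣ y₀) := by
    intro hy'
    have hqx2 : (q : ℤ) ∣ x₀ ^ 2 := by
      have : x₀ ^ 2 = A - n * y₀ ^ 2 := by ring
      rw [this]
      exact dvd_sub hqA (Dvd.dvd.mul_left (dvd_pow hy' two_ne_zero) n)
    have hqx : (q : ℤ) ∣ x₀ := hqZ.dvd_of_dvd_pow hqx2
    have : IsUnit ((q : ℤ)) := hgcd.isUnit_of_dvd' hqx hy'
    exact hqZ.not_unit this
  -- q² divides p * y₀⁴
  have hq2 : (q : ℤ) * q ∣ p * y₀ ^ 4 := by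
    rw [← heq]
    have h1 : (q : ℤ) * q ∣ A ^ 2 := by
      rw [sq]; exact mul_dvd_mul hqA hqA
    have h2 : (q : ℤ) * q ∣ z₀ ^ 2 := by
      rw [sq]; exact mul_dvd_mul hqz hqz
    exact dvd_sub h1 h2
  -- q divides p * y₀⁴, so q ∣ p or q ∣ y₀
  have hqpy : (q : ℤ) ∣ p * y₀ ^ 4 := dvd_trans (dvd_mul_right _ _) hq2
  rcases hqZ.dvd_mul.mp hqpy with hqp | hqy4
  · -- q ∣ p, so p = q * c with c a unit
    obtain ⟨c, hc⟩ := hqp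
    have hcunit : IsUnit c := by
      rcases hp.irreducible.isUnit_or_isUnit hc with h | h
      · exact absurd h hqZ.not_unit
      · exact h
    have : (q : ℤ) ∣ c * y₀ ^ 4 := by
      have h := hq2
      rw [hc] at h
      have : (q : ℤ) * (c * y₀ ^ 4) = (q : ℤ) * c * y₀ ^ 4 := by ring
      exact (mul_dvd_mul_iff_left (by exact_mod_cast hq.ne_zero : (q:ℤ) ≠ 0)).mp
        (by rw [this]; exact h)
    have hqy4 : (q : ℤ) ∣ y₀ ^ 4 := (hcunit.dvd_mul_left).mp this
    exact hqy (hqZ.dvd_of_dvd_pow hqy4)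
  · exact hqy (hqZ.dvd_of_dvd_pow hqy4)
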